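/- Let G=(V,E) be a finite simple graph with a fixed total order on E, let δ ∈ (0,1/2), and let v ∈ V. Then for every complex number x, p_{G,δ}(x) = p_{G−v,δ}(x) + Σ over subsets T ⊆ E forming a tree with at least one edge whose vertex set contains v of x^{|T|} · w_T · p_{G∖V(T),δ}(x), where G−v and G∖V(T) denote the subgraphs induced on V∖{v} and V∖V(T) respectively. -/

import Mathlib

open MeasureTheory

attribute [local instance] Classical.propDecidable

namespace VolumePaper

variable {V : Type} [Fintype V]

/-- The set of endpoints of a finite set of (potential) edges. -/
noncomputable def verts (T : Finset (Sym2 V)) : Finset V :=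
  Finset.univ.filter (fun v => ∃ e ∈ T, v ∈ e)

/-- `T` forms a tree (necessarily with at least one edge): the graph on the set of
endpoints of `T` whose edges are the members of `T` is a tree. -/
def IsTreeSet (T : Finset (Sym2 V)) : Prop :=
  (SimpleGraph.induce (↑(verts T) : Set V)
    (SimpleGraph.fromEdgeSet (↑T : Set (Sym2 V)))).IsTree

/-- The broken edges of `T` relative to the induced subgraph `G[S]` and a fixed
total edge order (given by an injective function `ord` into `ℕ`): edges `e` of `G[S]`
not in `T` such that `e` is the largest edge of a (the) cycle of `T ∪ {e}`. -/
noncomputable def brokenEdgesOn (G : SimpleGraph V) (ord : Sym2 V → ℕ) (S : Finset V)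
    (T : Finset (Sym2 V)) : Finset (Sym2 V) :=
  Finset.univ.filter (fun e =>
    e ∈ G.edgeSet ∧ (∀ v ∈ e, v ∈ S) ∧ e ∉ T ∧
    ∃ (u : V) (c : (SimpleGraph.fromEdgeSet (insert e (↑T : Set (Sym2 V)))).Walk u u),
      c.IsCycle ∧ e ∈ c.edges ∧ ∀ e' ∈ c.edges, ord e' ≤ ord e)

/-- The broken edges of a tree `T`, relative to the graph induced by `G` on the
endpoints of `T`. -/
noncomputable def brokenEdges (G : SimpleGraph V) (ord : Sym2 V → ℕ)
    (T : Finset (Sym2 V)) : Finset (Sym2 V) :=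
  brokenEdgesOn G ord (verts T) T

/-- Indicator (as a real number) of the event `x_u + x_v > 1` on an unordered pair. -/
noncomputable def indGt (x : V → ℝ) : Sym2 V → ℝ :=
  Sym2.lift ⟨fun u v => if 1 < x u + x v then 1 else 0, by intro a b; dsimp only; rw [add_comm]⟩

/-- Indicator (as a real number) of the event `x_u + x_v ≤ 1` on an unordered pair. -/
noncomputable def indLe (x : V → ℝ) : Sym2 V → ℝ :=
  Sym2.lift ⟨fun u v => if x u + x v ≤ 1 then 1 else 0, by intro a b; dsimp only; rw [add_comm]⟩

/-- Extension of a function on a finite subset of coordinates by `0`. -/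
noncomputable def extFun (S : Finset V) (x : {v // v ∈ S} → ℝ) : V → ℝ :=
  fun v => if h : v ∈ S then x ⟨v, h⟩ else 0

/-- The integral `∫_{[0,1/2+δ]^S} ∏_{uv ∈ T} 1[x_u+x_v>1] ∏_{st ∈ E_T} 1[x_s+x_t ≤ 1] dμ`,
where `E_T` is the set of broken edges of `T` relative to `G[S]`. -/
noncomputable def treeIntegral (G : SimpleGraph V) (ord : Sym2 V → ℕ) (δ : ℝ)
    (S : Finset V) (T : Finset (Sym2 V)) : ℝ :=
  ∫ x : {v // v ∈ S} → ℝ in Set.univ.pi (fun _ => Set.Icc (0:ℝ) (1/2 + δ)),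
    (∏ e ∈ T, indGt (extFun S x) e) * ∏ e ∈ brokenEdgesOn G ord S T, indLe (extFun S x) e

/-- The weight `w_T` of a tree `T` of edges of `G`. -/
noncomputable def treeWeight (G : SimpleGraph V) (ord : Sym2 V → ℕ) (δ : ℝ)
    (T : Finset (Sym2 V)) : ℝ :=
  (1/2 + δ) ^ (-((verts T).card : ℤ)) * (-1 : ℝ) ^ T.card *
    treeIntegral G ord δ (verts T) T

/-- The connected components (each having at least one edge) of a set `F` of edges. -/
noncomputable def comps (F : Finset (Sym2 V)) : Finset (Finset (Sym2 V)) :=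
  F.image (fun e => F.filter (fun e' => ∃ u ∈ e, ∃ v ∈ e',
    (SimpleGraph.fromEdgeSet (↑F : Set (Sym2 V))).Reachable u v))

/-- `F` is a forest of edges of `G` all of whose endpoints lie in `S`. -/
def IsForestOn (G : SimpleGraph V) (S : Finset V) (F : Finset (Sym2 V)) : Prop :=
  (↑F : Set (Sym2 V)) ⊆ G.edgeSet ∧ (∀ e ∈ F, ∀ v ∈ e, v ∈ S) ∧
    (SimpleGraph.fromEdgeSet (↑F : Set (Sym2 V))).IsAcyclic

/-- The polynomial `p_{G[S],δ}(x) = ∑_{F forest of G[S]} (∏_{T comp. of F} w_T) x^{|F|}`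
(with weights computed in `G`). -/
noncomputable def pPolyOn (G : SimpleGraph V) (ord : Sym2 V → ℕ) (δ : ℝ) (S : Finset V) :
    Polynomial ℂ :=
  ∑ F ∈ Finset.univ.filter (fun F => IsForestOn G S F),
    Polynomial.monomial F.card (((∏ T ∈ comps F, treeWeight G ord δ T : ℝ)) : ℂ)

/-- The polynomial `p_{G,δ}`. -/
noncomputable def pPoly (G : SimpleGraph V) (ord : Sym2 V → ℕ) (δ : ℝ) : Polynomial ℂ :=
  pPolyOn G ord δ Finset.univ

/-- `T` is (the edge set of) a spanning tree of the induced subgraph `G[S]`. -/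
def IsSpanningTreeOn (G : SimpleGraph V) (S : Finset V) (T : Finset (Sym2 V)) : Prop :=
  (↑T : Set (Sym2 V)) ⊆ G.edgeSet ∧ (∀ e ∈ T, ∀ v ∈ e, v ∈ S) ∧
    (SimpleGraph.induce (↑S : Set V)
      (SimpleGraph.fromEdgeSet (↑T : Set (Sym2 V)))).IsTree

/-- The weight `w(G[S])` of the subgraph of `G` induced by `S`. -/
noncomputable def indWeight (G : SimpleGraph V) (ord : Sym2 V → ℕ) (δ : ℝ)
    (S : Finset V) : ℝ :=
  ∑ T ∈ Finset.univ.filter (fun T => IsSpanningTreeOn G S T),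
    (1/2 + δ) ^ (-(S.card : ℤ)) * (-1 : ℝ) ^ T.card * treeIntegral G ord δ S T

/-- `G` has maximum degree at most `Δ`. -/
def maxDegreeLE (G : SimpleGraph V) (Δ : ℝ) : Prop :=
  ∀ v : V, ((Finset.univ.filter (fun u => G.Adj v u)).card : ℝ) ≤ Δ

/-- The truncated relaxed independent set polytope `P_{G,δ}`. -/
def polytope (G : SimpleGraph V) (δ : ℝ) : Set (V → ℝ) :=
  {x | (∀ v, x v ∈ Set.Icc (0:ℝ) (1/2 + δ)) ∧ ∀ ⦃u v⦄, G.Adj u v → x u + x v ≤ 1}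



open SimpleGraph

section AuxLemmas

set_option linter.unusedSectionVars false

lemma mem_verts {T : Finset (Sym2 V)} {v : V} : v ∈ verts T ↔ ∃ e ∈ T, v ∈ e := by
  simp [verts]

lemma mem_verts_of_mem {T : Finset (Sym2 V)} {e : Sym2 V} (he : e ∈ T) {v : V} (hv : v ∈ e) :
    v ∈ verts T := mem_verts.2 ⟨e, he, hv⟩

lemma adj_fromEdgeSet_finset {F : Finset (Sym2 V)} {a b : V} :
    (fromEdgeSet (↑F : Set (Sym2 V))).Adj a b ↔ s(a, b) ∈ F ∧ a ≠ b := by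
  rw [fromEdgeSet_adj]; simp

lemma mem_verts_of_adj {F : Finset (Sym2 V)} {a b : V}
    (h : (fromEdgeSet (↑F : Set (Sym2 V))).Adj a b) : a ∈ verts F := by
  rw [adj_fromEdgeSet_finset] at h
  exact mem_verts_of_mem h.1 (by simp)

lemma verts_union {A B : Finset (Sym2 V)} : verts (A ∪ B) = verts A ∪ verts B := by
  ext v; simp only [mem_verts, Finset.mem_union]
  constructor
  · rintro ⟨e, he | he, hv⟩
    · exact Or.inl ⟨e, he, hv⟩
    · exact Or.inr ⟨e, he, hv⟩
  · rintro (⟨e, he, hv⟩ | ⟨e, he, hv⟩)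
    · exact ⟨e, Or.inl he, hv⟩
    · exact ⟨e, Or.inr he, hv⟩

/-- A walk in `A ∪ B` starting in `verts A` uses only edges of `A`. -/
lemma walk_edges_left {A B : Finset (Sym2 V)} (hd : Disjoint (verts A) (verts B))
    {u w : V} (p : (fromEdgeSet (↑(A ∪ B) : Set (Sym2 V))).Walk u w) (hu : u ∈ verts A) :
    ∀ e ∈ p.edges, e ∈ (fromEdgeSet (↑A : Set (Sym2 V))).edgeSet := by
  induction p with
  | nil => simp
  | @cons a b c h p ih =>
    have h' := adj_fromEdgeSet_finset.1 h
    have hA : s(a, b) ∈ A := by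
      rcases Finset.mem_union.1 h'.1 with hA | hB
      · exact hA
      · exact absurd (mem_verts_of_mem hB (by simp)) (Finset.disjoint_left.1 hd hu)
    have hb : b ∈ verts A := mem_verts_of_mem hA (by simp)
    intro e he
    rcases List.mem_cons.1 (by simpa using he) with rfl | he'
    · exact (SimpleGraph.mem_edgeSet _).2 (adj_fromEdgeSet_finset.2 ⟨hA, h'.2⟩)
    · exact ih hb e he'

lemma reachable_left {A B : Finset (Sym2 V)} (hd : Disjoint (verts A) (verts B))
    {u w : V} (h : (fromEdgeSet (↑(A ∪ B) : Set (Sym2 V))).Reachable u w)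
    (hu : u ∈ verts A) : (fromEdgeSet (↑A : Set (Sym2 V))).Reachable u w := by
  obtain ⟨p⟩ := h
  exact ⟨p.transfer _ (walk_edges_left hd p hu)⟩

lemma start_mem_verts_of_walk {A : Finset (Sym2 V)} {u w : V}
    (p : (fromEdgeSet (↑A : Set (Sym2 V))).Walk u w) (hne : u ≠ w) : u ∈ verts A := by
  cases p with
  | nil => exact absurd rfl hne
  | cons h _ => exact mem_verts_of_adj h

lemma mem_verts_of_reachable {A : Finset (Sym2 V)} {u w : V}
    (h : (fromEdgeSet (↑A : Set (Sym2 V))).Reachable u w) (hne : u ≠ w) :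
    u ∈ verts A ∧ w ∈ verts A := by
  obtain ⟨p⟩ := h
  exact ⟨start_mem_verts_of_walk p hne, start_mem_verts_of_walk p.reverse hne.symm⟩

lemma isAcyclic_union {A B : Finset (Sym2 V)} (hd : Disjoint (verts A) (verts B))
    (hA : (fromEdgeSet (↑A : Set (Sym2 V))).IsAcyclic)
    (hB : (fromEdgeSet (↑B : Set (Sym2 V))).IsAcyclic) :
    (fromEdgeSet (↑(A ∪ B) : Set (Sym2 V))).IsAcyclic := by
  intro u c hc
  cases c with
  | @cons _ b _ h p =>
    have h' := adj_fromEdgeSet_finset.1 h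
    rcases Finset.mem_union.1 h'.1 with hA' | hB'
    · have hu : u ∈ verts A := mem_verts_of_mem hA' (by simp)
      exact hA _ (hc.transfer (walk_edges_left hd (.cons h p) hu))
    · have hu : u ∈ verts B := mem_verts_of_mem hB' (by simp)
      have hBA : ∀ e ∈ (Walk.cons h p).edges,
          e ∈ (fromEdgeSet (↑(B ∪ A) : Set (Sym2 V))).edgeSet := by
        intro e he
        have hco : (↑(B ∪ A) : Set (Sym2 V)) = ↑(A ∪ B) := by rw [Finset.union_comm]
        rw [hco]
        exact (Walk.cons h p).edges_subset_edgeSet he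
      have hq : ((Walk.cons h p).transfer _ hBA).IsCycle := hc.transfer hBA
      have hEB : ∀ e ∈ ((Walk.cons h p).transfer _ hBA).edges,
          e ∈ (fromEdgeSet (↑B : Set (Sym2 V))).edgeSet :=
        walk_edges_left hd.symm ((Walk.cons h p).transfer _ hBA) hu
      exact hB _ (hq.transfer hEB)
  | nil => exact hc.ne_nil rfl

/-- Lift a walk to an induced subgraph when every adjacency's endpoints lie in `s`. -/
lemma exists_lift_walk {H : SimpleGraph V} {s : Set V}
    (hs : ∀ ⦃a b : V⦄, H.Adj a b → a ∈ s) {u w : V} (p : H.Walk u w)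
    (hu : u ∈ s) (hw : w ∈ s) :
    ∃ q : (H.induce s).Walk ⟨u, hu⟩ ⟨w, hw⟩,
      q.support.map Subtype.val = p.support ∧
      q.edges.map (Sym2.map Subtype.val) = p.edges := by
  induction p with
  | nil => exact ⟨Walk.nil, by simp, by simp⟩
  | @cons a b c h p ih =>
    have hb : b ∈ s := hs h.symm
    obtain ⟨q, hq1, hq2⟩ := ih hb hw
    refine ⟨Walk.cons (by exact h : (H.induce s).Adj ⟨a, hu⟩ ⟨b, hb⟩) q, ?_, ?_⟩
    · exact congrArg₂ List.cons rfl hq1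
    · exact congrArg₂ List.cons rfl hq2

lemma isAcyclic_of_induce_isAcyclic {H : SimpleGraph V} {s : Set V}
    (hs : ∀ ⦃a b : V⦄, H.Adj a b → a ∈ s) (hac : (H.induce s).IsAcyclic) :
    H.IsAcyclic := by
  intro u c hc
  have hu : u ∈ s := by
    cases c with
    | nil => exact absurd rfl hc.ne_nil
    | cons h p => exact hs h
  obtain ⟨q, hq1, hq2⟩ := exists_lift_walk hs c hu hu
  refine hac q ?_
  have hlen : q.length = c.length := by
    have := congrArg List.length hq2
    simpa [Walk.length_edges] using this
  refine ⟨⟨⟨?_⟩, ?_⟩, ?_⟩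
  · exact (hq2 ▸ hc.edges_nodup).of_map _
  · intro hnil
    have h0 : c.length = 0 := by rw [← hlen, hnil]; simp
    have h3 := hc.three_le_length
    omega
  · have htl : q.support.tail.map Subtype.val = c.support.tail := by
      rw [← hq1]; exact List.map_tail
    have hnd := hc.support_nodup
    rw [← htl] at hnd
    exact hnd.of_map _

lemma induce_isAcyclic_of_isAcyclic {H : SimpleGraph V} {s : Set V}
    (hac : H.IsAcyclic) : (H.induce s).IsAcyclic := by
  intro u c hc
  exact hac _ (hc.map (f := (Embedding.induce s).toHom) Subtype.val_injective)

lemma reachable_of_induce_reachable {H : SimpleGraph V} {s : Set V} {u w : V}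
    (hu : u ∈ s) (hw : w ∈ s)
    (h : (H.induce s).Reachable ⟨u, hu⟩ ⟨w, hw⟩) : H.Reachable u w :=
  h.map (Embedding.induce s).toHom

lemma isAcyclic_anti {G H : SimpleGraph V} (h : G ≤ H) (hH : H.IsAcyclic) : G.IsAcyclic :=
  fun _ c hc => hH _ ((Walk.mapLe_isCycle h).2 hc)

/-- The connected component of `v` in the graph on edge set `F`. -/
noncomputable def compOf (v : V) (F : Finset (Sym2 V)) : Finset (Sym2 V) :=
  F.filter (fun e => ∃ u ∈ e, (fromEdgeSet (↑F : Set (Sym2 V))).Reachable v u)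

lemma compOf_subset {v : V} {F : Finset (Sym2 V)} : compOf v F ⊆ F := Finset.filter_subset _ _

lemma mem_compOf {v : V} {F : Finset (Sym2 V)} {e : Sym2 V} :
    e ∈ compOf v F ↔ e ∈ F ∧ ∃ u ∈ e, (fromEdgeSet (↑F : Set (Sym2 V))).Reachable v u :=
  Finset.mem_filter

lemma reachable_of_mem_verts_compOf {v a : V} {F : Finset (Sym2 V)}
    (ha : a ∈ verts (compOf v F)) : (fromEdgeSet (↑F : Set (Sym2 V))).Reachable v a := by
  obtain ⟨e, he, hae⟩ := mem_verts.1 ha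
  obtain ⟨heF, u, hue, hreach⟩ := mem_compOf.1 he
  by_cases hua : u = a
  · exact hua ▸ hreach
  · have hadj : (fromEdgeSet (↑F : Set (Sym2 V))).Adj u a := by
      rw [adj_fromEdgeSet_finset]
      exact ⟨((Sym2.mem_and_mem_iff hua).1 ⟨hue, hae⟩) ▸ heF, hua⟩
    exact hreach.trans hadj.reachable

lemma mem_verts_compOf_self {v : V} {F : Finset (Sym2 V)} (hv : v ∈ verts F) :
    v ∈ verts (compOf v F) := by
  obtain ⟨e, he, hve⟩ := mem_verts.1 hv
  exact mem_verts_of_mem (mem_compOf.2 ⟨he, v, hve, Reachable.refl v⟩) hve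

lemma disjoint_verts_compOf {v : V} {F : Finset (Sym2 V)} :
    Disjoint (verts (compOf v F)) (verts (F \ compOf v F)) := by
  rw [Finset.disjoint_left]
  intro a ha ha'
  obtain ⟨e, he, hae⟩ := mem_verts.1 ha'
  have heF := Finset.mem_sdiff.1 he
  exact heF.2 (mem_compOf.2 ⟨heF.1, a, hae, reachable_of_mem_verts_compOf ha⟩)

lemma walk_edges_mem_compOf {v a b : V} {F : Finset (Sym2 V)}
    (p : (fromEdgeSet (↑F : Set (Sym2 V))).Walk a b)
    (hva : (fromEdgeSet (↑F : Set (Sym2 V))).Reachable v a) :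
    ∀ e ∈ p.edges, e ∈ (fromEdgeSet (↑(compOf v F) : Set (Sym2 V))).edgeSet := by
  induction p with
  | nil => simp
  | @cons a' c' b' h p' ih =>
    intro e he
    have h' := adj_fromEdgeSet_finset.1 h
    rcases List.mem_cons.1 (by simpa using he) with rfl | he'
    · refine (SimpleGraph.mem_edgeSet _).2 (adj_fromEdgeSet_finset.2 ⟨?_, h'.2⟩)
      exact mem_compOf.2 ⟨h'.1, a', by simp, hva⟩
    · exact ih (hva.trans h.reachable) e he'

lemma reachable_compOf_of_mem {v a b : V} {F : Finset (Sym2 V)}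
    (ha : a ∈ verts (compOf v F)) (hb : b ∈ verts (compOf v F)) :
    (fromEdgeSet (↑(compOf v F) : Set (Sym2 V))).Reachable a b := by
  have hva := reachable_of_mem_verts_compOf ha
  have hvb := reachable_of_mem_verts_compOf hb
  obtain ⟨p⟩ := hva.symm.trans hvb
  exact ⟨p.transfer _ (walk_edges_mem_compOf p hva)⟩

lemma isTreeSet_compOf {v : V} {F : Finset (Sym2 V)}
    (hac : (fromEdgeSet (↑F : Set (Sym2 V))).IsAcyclic) (hv : v ∈ verts F) :
    IsTreeSet (compOf v F) := by
  refine ⟨(SimpleGraph.connected_iff _).2 ⟨?_, ?_⟩, ?_⟩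
  · rintro ⟨a, ha⟩ ⟨b, hb⟩
    have ha' : a ∈ verts (compOf v F) := ha
    have hb' : b ∈ verts (compOf v F) := hb
    obtain ⟨p⟩ := reachable_compOf_of_mem ha' hb'
    obtain ⟨q, -, -⟩ := exists_lift_walk
      (fun x y hxy => Finset.mem_coe.2 (mem_verts_of_adj hxy)) p ha hb
    exact ⟨q⟩
  · exact ⟨⟨v, Finset.mem_coe.2 (mem_verts_compOf_self hv)⟩⟩
  · exact induce_isAcyclic_of_isAcyclic
      (isAcyclic_anti (fromEdgeSet_mono (Finset.coe_subset.2 compOf_subset)) hac)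

lemma IsTreeSet.reachable {T : Finset (Sym2 V)} (hT : IsTreeSet T) {a b : V}
    (ha : a ∈ verts T) (hb : b ∈ verts T) :
    (fromEdgeSet (↑T : Set (Sym2 V))).Reachable a b := by
  have h := hT.isConnected.preconnected ⟨a, Finset.mem_coe.2 ha⟩ ⟨b, Finset.mem_coe.2 hb⟩
  exact reachable_of_induce_reachable _ _ h

lemma IsTreeSet.isAcyclic_fromEdgeSet {T : Finset (Sym2 V)} (hT : IsTreeSet T) :
    (fromEdgeSet (↑T : Set (Sym2 V))).IsAcyclic :=
  isAcyclic_of_induce_isAcyclic (fun a b h => Finset.mem_coe.2 (mem_verts_of_adj h)) hT.2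

lemma image_comp_filter {A B : Finset (Sym2 V)} (hd : Disjoint (verts A) (verts B)) :
    A.image (fun e => (A ∪ B).filter (fun e' => ∃ u ∈ e, ∃ w ∈ e',
      (fromEdgeSet (↑(A ∪ B) : Set (Sym2 V))).Reachable u w)) = comps A := by
  apply Finset.image_congr
  intro e he
  have heA : e ∈ A := he
  ext e'
  simp only [Finset.mem_filter, Finset.mem_union]
  constructor
  · rintro ⟨hAB, u, hue, w, hwe', hr⟩
    have huA : u ∈ verts A := mem_verts_of_mem heA hue
    have hrA := reachable_left hd hr huA
    rcases hAB with hA' | hB'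
    · exact ⟨hA', u, hue, w, hwe', hrA⟩
    · exfalso
      have hwB : w ∈ verts B := mem_verts_of_mem hB' hwe'
      have hne : u ≠ w := fun h => Finset.disjoint_left.1 hd (h ▸ huA) hwB
      exact Finset.disjoint_left.1 hd (mem_verts_of_reachable hrA hne).2 hwB
  · rintro ⟨hA', u, hue, w, hwe', hr⟩
    exact ⟨Or.inl hA', u, hue, w, hwe',
      hr.mono (fromEdgeSet_mono (Finset.coe_subset.2 Finset.subset_union_left))⟩

lemma comps_union {A B : Finset (Sym2 V)} (hd : Disjoint (verts A) (verts B)) :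
    comps (A ∪ B) = comps A ∪ comps B := by
  have h1 := image_comp_filter hd
  have h2 := image_comp_filter hd.symm
  rw [Finset.union_comm B A] at h2
  show (A ∪ B).image _ = _
  rw [Finset.image_union, h1, h2]

lemma comps_eq_singleton {A : Finset (Sym2 V)}
    (h : ∀ a ∈ verts A, ∀ b ∈ verts A, (fromEdgeSet (↑A : Set (Sym2 V))).Reachable a b)
    (hne : A.Nonempty) : comps A = {A} := by
  show A.image _ = _
  have hconst : ∀ e ∈ (↑A : Set (Sym2 V)), A.filter (fun e' => ∃ u ∈ e, ∃ w ∈ e',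
      (fromEdgeSet (↑A : Set (Sym2 V))).Reachable u w) = A := by
    intro e he
    refine Finset.filter_true_of_mem ?_
    intro e' he'
    exact ⟨e.out.1, Sym2.out_fst_mem e, e'.out.1, Sym2.out_fst_mem e',
      h _ (mem_verts_of_mem he (Sym2.out_fst_mem e)) _ (mem_verts_of_mem he' (Sym2.out_fst_mem e'))⟩
  rw [Finset.image_congr hconst]
  exact Finset.image_const hne A

lemma subset_of_mem_comps {F C : Finset (Sym2 V)} (h : C ∈ comps F) : C ⊆ F := by
  obtain ⟨e, -, rfl⟩ := Finset.mem_image.1 h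
  exact Finset.filter_subset _ _

lemma compOf_union_eq {v : V} {T F' : Finset (Sym2 V)} (hT : IsTreeSet T)
    (hv : v ∈ verts T) (hd : Disjoint (verts T) (verts F')) :
    compOf v (T ∪ F') = T := by
  ext e
  rw [mem_compOf, Finset.mem_union]
  constructor
  · rintro ⟨heT | heF', u, hue, hr⟩
    · exact heT
    · exfalso
      have hu : u ∈ verts F' := mem_verts_of_mem heF' hue
      have hrT := reachable_left hd hr hv
      have hne : v ≠ u := fun h => Finset.disjoint_left.1 hd hv (h ▸ hu)
      exact Finset.disjoint_left.1 hd (mem_verts_of_reachable hrT hne).2 hu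
  · intro heT
    refine ⟨Or.inl heT, e.out.1, Sym2.out_fst_mem e, ?_⟩
    exact (hT.reachable hv (mem_verts_of_mem heT (Sym2.out_fst_mem e))).mono
      (fromEdgeSet_mono (Finset.coe_subset.2 Finset.subset_union_left))

end AuxLemmas

/-- The deletion recursion: for every vertex `v` and complex `x`,
`p_{G,δ}(x) = p_{G−v,δ}(x) + ∑_T x^{|T|} w_T p_{G∖V(T),δ}(x)`, the sum being over all
edge sets `T ⊆ E(G)` forming a tree (with at least one edge) whose vertex set
contains `v`. -/
theorem statement11 (V : Type) [Fintype V] (G : SimpleGraph V) (ord : Sym2 V → ℕ)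
    (hord : Function.Injective ord) (δ : ℝ) (hδ : δ ∈ Set.Ioo (0:ℝ) (1/2))
    (v : V) (x : ℂ) :
    Polynomial.eval x (pPolyOn G ord δ Finset.univ) =
      Polynomial.eval x (pPolyOn G ord δ (Finset.univ.erase v)) +
      ∑ T ∈ Finset.univ.filter (fun T : Finset (Sym2 V) =>
          (↑T : Set (Sym2 V)) ⊆ G.edgeSet ∧ IsTreeSet T ∧ v ∈ verts T),
        x ^ T.card * (treeWeight G ord δ T : ℂ) *
          Polynomial.eval x (pPolyOn G ord δ (Finset.univ \ verts T)) := by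
  classical
  have hEval : ∀ S : Finset V, Polynomial.eval x (pPolyOn G ord δ S) =
      ∑ F ∈ Finset.univ.filter (fun F => IsForestOn G S F),
        ((∏ C ∈ comps F, treeWeight G ord δ C : ℝ) : ℂ) * x ^ F.card := by
    intro S
    rw [pPolyOn, Polynomial.eval_finset_sum]
    exact Finset.sum_congr rfl (fun F _ => by rw [Polynomial.eval_monomial])
  rw [hEval, hEval]
  rw [← Finset.sum_filter_add_sum_filter_not
    (Finset.univ.filter (fun F => IsForestOn G Finset.univ F)) (fun F => v ∈ verts F)
    (fun F => ((∏ C ∈ comps F, treeWeight G ord δ C : ℝ) : ℂ) * x ^ F.card), add_comm]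
  congr 1
  · -- forests avoiding v  ↔  forests of G - v
    refine Finset.sum_congr ?_ (fun F _ => rfl)
    rw [Finset.filter_filter]
    refine Finset.filter_congr (fun F _ => ?_)
    constructor
    · rintro ⟨⟨h1, h2, h3⟩, h4⟩
      refine ⟨h1, fun e he u hu => ?_, h3⟩
      refine Finset.mem_erase.2 ⟨fun huv => h4 ?_, Finset.mem_univ u⟩
      exact huv ▸ mem_verts_of_mem he hu
    · rintro ⟨h1, h2, h3⟩
      refine ⟨⟨h1, fun e he u hu => Finset.mem_univ u, h3⟩, fun hv' => ?_⟩
      obtain ⟨e, he, hve⟩ := mem_verts.1 hv'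
      exact Finset.notMem_erase v Finset.univ (h2 e he v hve)
  · -- forests containing v ↔ (tree containing v, forest avoiding the tree)
    have hrw : ∑ T ∈ Finset.univ.filter (fun T : Finset (Sym2 V) =>
          (↑T : Set (Sym2 V)) ⊆ G.edgeSet ∧ IsTreeSet T ∧ v ∈ verts T),
        x ^ T.card * (treeWeight G ord δ T : ℂ) *
          Polynomial.eval x (pPolyOn G ord δ (Finset.univ \ verts T)) =
        ∑ T ∈ Finset.univ.filter (fun T : Finset (Sym2 V) =>
          (↑T : Set (Sym2 V)) ⊆ G.edgeSet ∧ IsTreeSet T ∧ v ∈ verts T),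
        ∑ F' ∈ Finset.univ.filter (fun F' => IsForestOn G (Finset.univ \ verts T) F'),
          x ^ T.card * (treeWeight G ord δ T : ℂ) *
            (((∏ C ∈ comps F', treeWeight G ord δ C : ℝ) : ℂ) * x ^ F'.card) := by
      refine Finset.sum_congr rfl (fun T _ => ?_)
      rw [hEval, Finset.mul_sum]
    rw [hrw, Finset.sum_sigma']
    refine (Finset.sum_nbij' (fun p => p.1 ∪ p.2)
      (fun F => ⟨compOf v F, F \ compOf v F⟩) ?_ ?_ ?_ ?_ ?_).symm
    · -- hi : union of pair is a forest containing v
      rintro ⟨T, F'⟩ hp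
      obtain ⟨hT, hF'⟩ := Finset.mem_sigma.1 hp
      obtain ⟨-, hTE, hTree, hvT⟩ := Finset.mem_filter.1 hT
      obtain ⟨-, hF'E, hF'S, hF'ac⟩ :
          F' ∈ Finset.univ ∧ (↑F' : Set (Sym2 V)) ⊆ G.edgeSet ∧
            (∀ e ∈ F', ∀ u ∈ e, u ∈ Finset.univ \ verts T) ∧
            (fromEdgeSet (↑F' : Set (Sym2 V))).IsAcyclic := by
        have := Finset.mem_filter.1 hF'
        exact ⟨this.1, this.2.1, this.2.2.1, this.2.2.2⟩
      have hd : Disjoint (verts T) (verts F') := by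
        rw [Finset.disjoint_right]
        intro a ha
        obtain ⟨e, he, hae⟩ := mem_verts.1 ha
        exact (Finset.mem_sdiff.1 (hF'S e he a hae)).2
      refine Finset.mem_filter.2 ⟨Finset.mem_filter.2 ⟨Finset.mem_univ _, ?_, ?_, ?_⟩, ?_⟩
      · rw [Finset.coe_union]
        exact Set.union_subset hTE hF'E
      · exact fun e _ u _ => Finset.mem_univ u
      · exact isAcyclic_union hd hTree.isAcyclic_fromEdgeSet hF'ac
      · show v ∈ verts (T ∪ F')
        rw [verts_union]
        exact Finset.mem_union_left _ hvT
    · -- hj : component of v and the rest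
      intro F hF
      obtain ⟨hmem, hvF⟩ := Finset.mem_filter.1 hF
      obtain ⟨-, hFE, -, hFac⟩ :
          F ∈ Finset.univ ∧ (↑F : Set (Sym2 V)) ⊆ G.edgeSet ∧
            (∀ e ∈ F, ∀ u ∈ e, u ∈ Finset.univ) ∧
            (fromEdgeSet (↑F : Set (Sym2 V))).IsAcyclic := by
        have := Finset.mem_filter.1 hmem
        exact ⟨this.1, this.2.1, this.2.2.1, this.2.2.2⟩
      refine Finset.mem_sigma.2 ⟨Finset.mem_filter.2 ⟨Finset.mem_univ _, ?_, ?_, ?_⟩,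
        Finset.mem_filter.2 ⟨Finset.mem_univ _, ?_, ?_, ?_⟩⟩
      · exact fun e he => hFE (compOf_subset he)
      · exact isTreeSet_compOf hFac hvF
      · exact mem_verts_compOf_self hvF
      · exact fun e he => hFE (Finset.mem_sdiff.1 he).1
      · intro e he u hu
        refine Finset.mem_sdiff.2 ⟨Finset.mem_univ u, fun huT => ?_⟩
        exact Finset.disjoint_left.1 disjoint_verts_compOf huT (mem_verts_of_mem he hu)
      · exact isAcyclic_anti
          (fromEdgeSet_mono (Finset.coe_subset.2 (Finset.sdiff_subset))) hFac
    · -- left inverse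
      rintro ⟨T, F'⟩ hp
      obtain ⟨hT, hF'⟩ := Finset.mem_sigma.1 hp
      obtain ⟨-, hTE, hTree, hvT⟩ := Finset.mem_filter.1 hT
      have hF'S : ∀ e ∈ F', ∀ u ∈ e, u ∈ Finset.univ \ verts T :=
        (Finset.mem_filter.1 hF').2.2.1
      have hd : Disjoint (verts T) (verts F') := by
        rw [Finset.disjoint_right]
        intro a ha
        obtain ⟨e, he, hae⟩ := mem_verts.1 ha
        exact (Finset.mem_sdiff.1 (hF'S e he a hae)).2
      have hdTF' : Disjoint T F' := by
        rw [Finset.disjoint_left]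
        intro e heT heF'
        exact Finset.disjoint_left.1 hd (mem_verts_of_mem heT (Sym2.out_fst_mem e))
          (mem_verts_of_mem heF' (Sym2.out_fst_mem e))
      have h1 : compOf v (T ∪ F') = T := compOf_union_eq hTree hvT hd
      show (⟨compOf v (T ∪ F'), (T ∪ F') \ compOf v (T ∪ F')⟩ :
        Σ _ : Finset (Sym2 V), Finset (Sym2 V)) = ⟨T, F'⟩
      rw [h1, Finset.union_sdiff_cancel_left hdTF']
    · -- right inverse
      intro F hF
      exact Finset.union_sdiff_of_subset compOf_subset
    · -- values agree
      rintro ⟨T, F'⟩ hp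
      obtain ⟨hT, hF'⟩ := Finset.mem_sigma.1 hp
      obtain ⟨-, hTE, hTree, hvT⟩ := Finset.mem_filter.1 hT
      have hF'S : ∀ e ∈ F', ∀ u ∈ e, u ∈ Finset.univ \ verts T :=
        (Finset.mem_filter.1 hF').2.2.1
      have hd : Disjoint (verts T) (verts F') := by
        rw [Finset.disjoint_right]
        intro a ha
        obtain ⟨e, he, hae⟩ := mem_verts.1 ha
        exact (Finset.mem_sdiff.1 (hF'S e he a hae)).2
      have hdTF' : Disjoint T F' := by
        rw [Finset.disjoint_left]
        intro e heT heF'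
        exact Finset.disjoint_left.1 hd (mem_verts_of_mem heT (Sym2.out_fst_mem e))
          (mem_verts_of_mem heF' (Sym2.out_fst_mem e))
      have hne : T.Nonempty := by
        obtain ⟨e, he, -⟩ := mem_verts.1 hvT
        exact ⟨e, he⟩
      have hcomps : comps (T ∪ F') = insert T (comps F') := by
        rw [comps_union hd, comps_eq_singleton (fun a ha b hb => hTree.reachable ha hb) hne,
          ← Finset.insert_eq]
      have hTnot : T ∉ comps F' := by
        intro hmem
        obtain ⟨e, he⟩ := hne
        exact Finset.disjoint_left.1 hdTF' he (subset_of_mem_comps hmem he)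
      show x ^ T.card * (treeWeight G ord δ T : ℂ) *
          (((∏ C ∈ comps F', treeWeight G ord δ C : ℝ) : ℂ) * x ^ F'.card) =
        ((∏ C ∈ comps (T ∪ F'), treeWeight G ord δ C : ℝ) : ℂ) * x ^ (T ∪ F').card
      rw [hcomps, Finset.prod_insert hTnot, Finset.card_union_of_disjoint hdTF']
      push_cast
      ring


end VolumePaper
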